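/- Let T be a table with suppressed cell set E and suppressed graph H, and let Q ⊆ E. Then Q is totally protected in T if and only if both of the following hold: (1) every edge in Q has its two endpoints mutually reachable in H (i.e., the edges of Q are contained in the strongly connected components of H); and (2) for every strongly connected component D of H, the undirected graph with vertex set D and edge set E(D) − Q (directions disregarded) is connected. -/

import Mathlib

/-- A two-dimensional table: values, lower/upper bounds, and a set of suppressed cells. -/
structure Table (R C : Type*) where
  val : R × C → ℝ
  lo : R × C → ℝ
  hi : R × C → ℝ
  sup : Set (R × C)
  lo_le : ∀ e, lo e ≤ val e
  le_hi : ∀ e, val e ≤ hi e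
  lo_lt_hi : ∀ e, lo e < hi e

variable {R C : Type*}

/-- A bounded feasible assignment of a table. -/
def BFA [Fintype R] [Fintype C] (T : Table R C) (x : R × C → ℝ) : Prop :=
  (∀ e, e ∉ T.sup → x e = T.val e) ∧
  (∀ e ∈ T.sup, T.lo e ≤ x e ∧ x e ≤ T.hi e) ∧
  (∀ i : R, ∑ j, x (i, j) = ∑ j, T.val (i, j)) ∧
  (∀ j : C, ∑ i, x (i, j) = ∑ i, T.val (i, j))

/-- One traversable step in the mixed graph with edge set `S`: the edge of a cell `e`
may be traversed from its row endpoint to its column endpoint iff `val e < hi e`,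
and from its column endpoint to its row endpoint iff `lo e < val e`. -/
def MStep (T : Table R C) (S : Set (R × C)) (v w : R ⊕ C) : Prop :=
  ∃ e ∈ S, (T.val e < T.hi e ∧ v = Sum.inl e.1 ∧ w = Sum.inr e.2) ∨
           (T.lo e < T.val e ∧ v = Sum.inr e.2 ∧ w = Sum.inl e.1)

/-- Reachability along traversable paths in the mixed graph with edge set `S`. -/
def MReach (T : Table R C) (S : Set (R × C)) : (R ⊕ C) → (R ⊕ C) → Prop :=
  Relation.ReflTransGen (MStep T S)

/-- Mutual reachability in the mixed graph with edge set `S`. -/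
def MutReach (T : Table R C) (S : Set (R × C)) (v w : R ⊕ C) : Prop :=
  MReach T S v w ∧ MReach T S w v

/-- `D` is a strongly connected component of the mixed graph with edge set `S`:
an equivalence class of mutual reachability. -/
def IsSCC (T : Table R C) (S : Set (R × C)) (D : Set (R ⊕ C)) : Prop :=
  ∃ v, D = {w | MutReach T S v w}

/-- Direction-blind adjacency via an edge in `S`. -/
def Adj (S : Set (R × C)) (v w : R ⊕ C) : Prop :=
  ∃ e ∈ S, (v = Sum.inl e.1 ∧ w = Sum.inr e.2) ∨ (v = Sum.inr e.2 ∧ w = Sum.inl e.1)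

/-- Direction-blind connectivity via edges in `S`. -/
def Conn (S : Set (R × C)) : (R ⊕ C) → (R ⊕ C) → Prop :=
  Relation.ReflTransGen (Adj S)

/-- `D` is a connected component of the (direction-blind) graph with edge set `S`. -/
def IsCC (S : Set (R × C)) (D : Set (R ⊕ C)) : Prop :=
  ∃ v, D = {w | Conn S v w}

/-- The edges of `S` with both endpoints in the vertex set `D`. -/
def EdgesIn (S : Set (R × C)) (D : Set (R ⊕ C)) : Set (R × C) :=
  {e | e ∈ S ∧ Sum.inl e.1 ∈ D ∧ Sum.inr e.2 ∈ D}

/-- All vertices of `D` are joined by direction-blind paths using edges in `S`. -/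
def ConnectedOn (S : Set (R × C)) (D : Set (R ⊕ C)) : Prop :=
  ∀ v ∈ D, ∀ w ∈ D, Conn S v w

/-- `F` is entire: it is the sum of a power series centered at some point with
infinite radius of convergence. -/
def Entire {ι : Type*} [Fintype ι] (F : (ι → ℝ) → ℝ) : Prop :=
  ∃ (p : FormalMultilinearSeries ℝ (ι → ℝ) ℝ) (c : ι → ℝ),
    HasFPowerSeriesOnBall F p c ⊤

/-- `F x` depends only on the coordinates `x e` with `e ∈ S`. -/
def DependsOnlyOn {ι : Type*} (F : (ι → ℝ) → ℝ) (S : Set ι) : Prop :=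
  ∀ x y : ι → ℝ, (∀ e ∈ S, x e = y e) → F x = F y

/-- `S` is the effective area of `F`: the smallest set of coordinates that `F`
depends on. -/
def IsEA {ι : Type*} (F : (ι → ℝ) → ℝ) (S : Set ι) : Prop :=
  DependsOnlyOn F S ∧ ∀ S', DependsOnlyOn F S' → S ⊆ S'

/-- `F` takes the same value at every bounded feasible assignment of `T`. -/
def TableInvariant [Fintype R] [Fintype C] (T : Table R C) (F : (R × C → ℝ) → ℝ) : Prop :=
  ∀ x y, BFA T x → BFA T y → F x = F y

/-- `Q` is totally protected in `T`: there is no nonconstant analytic invariant of `T`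
whose effective area is contained in `Q`. -/
def TotallyProtected [Fintype R] [Fintype C] (T : Table R C) (Q : Set (R × C)) : Prop :=
  ¬ ∃ (F : (R × C → ℝ) → ℝ) (S : Set (R × C)),
      Entire F ∧ DependsOnlyOn F T.sup ∧ TableInvariant T F ∧
      IsEA F S ∧ S ⊆ Q ∧ S.Nonempty

section AuxStmt5

open Classical
set_option linter.unusedSectionVars false

variable [Fintype R] [Fintype C]

private lemma bfa_val (T : Table R C) : BFA T T.val :=
  ⟨fun _ _ => rfl, fun e _ => ⟨T.lo_le e, T.le_hi e⟩, fun _ => rfl, fun _ => rfl⟩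

private lemma mutReach_refl (T : Table R C) (S : Set (R × C)) (v : R ⊕ C) :
    MutReach T S v v :=
  ⟨Relation.ReflTransGen.refl, Relation.ReflTransGen.refl⟩

private lemma mutReach_symm {T : Table R C} {S : Set (R × C)} {v w : R ⊕ C}
    (h : MutReach T S v w) : MutReach T S w v := ⟨h.2, h.1⟩

private lemma mutReach_trans {T : Table R C} {S : Set (R × C)} {u v w : R ⊕ C}
    (h : MutReach T S u v) (h' : MutReach T S v w) : MutReach T S u w :=
  ⟨h.1.trans h'.1, h'.2.trans h.2⟩

private lemma cut_rows (z : R × C → ℝ) (hrow : ∀ i : R, ∑ j, z (i, j) = 0)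
    (A : Set (R ⊕ C)) :
    ∑ g : R × C, (if Sum.inl g.1 ∈ A then z g else 0) = 0 := by
  rw [Fintype.sum_prod_type]
  refine Finset.sum_eq_zero fun i _ => ?_
  by_cases h : (Sum.inl i : R ⊕ C) ∈ A
  · simpa [h] using hrow i
  · simp [h]

private lemma cut_cols (z : R × C → ℝ) (hcol : ∀ j : C, ∑ i, z (i, j) = 0)
    (A : Set (R ⊕ C)) :
    ∑ g : R × C, (if Sum.inr g.2 ∈ A then z g else 0) = 0 := by
  rw [Fintype.sum_prod_type_right]
  refine Finset.sum_eq_zero fun j _ => ?_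
  by_cases h : (Sum.inr j : R ⊕ C) ∈ A
  · simpa [h] using hcol j
  · simp [h]

/-- The cut identity for circulations relative to a set `A` of vertices. -/
private lemma cut_identity (z : R × C → ℝ) (hrow : ∀ i : R, ∑ j, z (i, j) = 0)
    (hcol : ∀ j : C, ∑ i, z (i, j) = 0) (A : Set (R ⊕ C)) :
    ∑ g : R × C, ((if Sum.inl g.1 ∈ A then z g else 0) -
      (if Sum.inr g.2 ∈ A then z g else 0)) = 0 := by
  rw [Finset.sum_sub_distrib, cut_rows z hrow A, cut_cols z hcol A, sub_zero]

/-- If a circulation is positive on a cell, then the column endpoint can reach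
back to the row endpoint along steps supported by the circulation. -/
private lemma circulation_cut {M : (R ⊕ C) → (R ⊕ C) → Prop} (z : R × C → ℝ)
    (hrow : ∀ i : R, ∑ j, z (i, j) = 0) (hcol : ∀ j : C, ∑ i, z (i, j) = 0)
    (hpos : ∀ g : R × C, 0 < z g → M (Sum.inl g.1) (Sum.inr g.2))
    (hneg : ∀ g : R × C, z g < 0 → M (Sum.inr g.2) (Sum.inl g.1))
    {f : R × C} (hf : 0 < z f) :
    Relation.ReflTransGen M (Sum.inr f.2) (Sum.inl f.1) := by
  set A : Set (R ⊕ C) := {v | Relation.ReflTransGen M (Sum.inr f.2) v} with hA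
  by_contra hcon
  have hcon' : Sum.inl f.1 ∉ A := hcon
  have hterm : ∀ g ∈ (Finset.univ : Finset (R × C)),
      (if Sum.inl g.1 ∈ A then z g else 0) - (if Sum.inr g.2 ∈ A then z g else 0) ≤ 0 := by
    intro g _
    by_cases h1 : Sum.inl g.1 ∈ A <;> by_cases h2 : Sum.inr g.2 ∈ A
    · simp [h1, h2]
    · have hzg : z g ≤ 0 := by
        by_contra hzg
        exact h2 (Relation.ReflTransGen.tail h1 (hpos g (lt_of_not_ge hzg)))
      simpa [h1, h2] using hzg
    · have hzg : 0 ≤ z g := by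
        by_contra hzg
        exact h1 (Relation.ReflTransGen.tail h2 (hneg g (lt_of_not_ge hzg)))
      simp [h1, h2]; linarith
    · simp [h1, h2]
  have hzero := (Finset.sum_eq_zero_iff_of_nonpos hterm).mp
    (cut_identity z hrow hcol A)
  have hf2 : Sum.inr f.2 ∈ A := Relation.ReflTransGen.refl
  have := hzero f (Finset.mem_univ f)
  rw [if_neg hcon', if_pos hf2] at this
  linarith

/-- A cell of a BFA whose endpoints are not mutually reachable keeps its value. -/
private lemma fixed_cell {T : Table R C} {x : R × C → ℝ} (hx : BFA T x) {e : R × C}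
    (hmr : ¬ MutReach T T.sup (Sum.inl e.1) (Sum.inr e.2)) : x e = T.val e := by
  obtain ⟨hoff, hbd, hrow, hcol⟩ := hx
  set z : R × C → ℝ := fun g => x g - T.val g with hz
  have hzrow : ∀ i : R, ∑ j, z (i, j) = 0 := by
    intro i; simp only [hz]; rw [Finset.sum_sub_distrib, hrow i, sub_self]
  have hzcol : ∀ j : C, ∑ i, z (i, j) = 0 := by
    intro j; simp only [hz]; rw [Finset.sum_sub_distrib, hcol j, sub_self]
  have hmem : ∀ g, z g ≠ 0 → g ∈ T.sup := by
    intro g hg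
    by_contra h
    exact hg (by simp [hz, hoff g h])
  have hpos : ∀ g : R × C, 0 < z g → MStep T T.sup (Sum.inl g.1) (Sum.inr g.2) := by
    intro g hg
    have hm := hmem g (ne_of_gt hg)
    have hlt : T.val g < x g := by simp only [hz] at hg; linarith
    exact ⟨g, hm, Or.inl ⟨lt_of_lt_of_le hlt (hbd g hm).2, rfl, rfl⟩⟩
  have hneg : ∀ g : R × C, z g < 0 → MStep T T.sup (Sum.inr g.2) (Sum.inl g.1) := by
    intro g hg
    have hm := hmem g (ne_of_lt hg)
    have hlt : x g < T.val g := by simp only [hz] at hg; linarith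
    exact ⟨g, hm, Or.inr ⟨lt_of_le_of_lt (hbd g hm).1 hlt, rfl, rfl⟩⟩
  by_contra hne
  have hzne : z e ≠ 0 := sub_ne_zero.mpr hne
  rcases hzne.lt_or_gt with hlt | hgt
  · have hreach : Relation.ReflTransGen (Function.swap (MStep T T.sup))
        (Sum.inr e.2) (Sum.inl e.1) := by
      refine circulation_cut (z := fun g => - z g) ?_ ?_ ?_ ?_ (by simpa using hlt)
      · intro i; rw [Finset.sum_neg_distrib, hzrow i, neg_zero]
      · intro j; rw [Finset.sum_neg_distrib, hzcol j, neg_zero]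
      · intro g hg; exact hneg g (by simpa using hg)
      · intro g hg; exact hpos g (by simpa using hg)
    exact hmr ⟨Relation.reflTransGen_swap.mp hreach,
      Relation.ReflTransGen.single (hneg e hlt)⟩
  · exact hmr ⟨Relation.ReflTransGen.single (hpos e hgt),
      circulation_cut z hzrow hzcol hpos hneg hgt⟩

end AuxStmt5
section AuxStmt5b

open Classical
set_option linter.unusedSectionVars false

variable [Fintype R] [Fintype C]

private lemma sum_ite_cell_row (g0 : R × C) (i : R) :
    ∑ j, (if (i, j) = g0 then (1 : ℝ) else 0) = if i = g0.1 then 1 else 0 := by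
  by_cases h : i = g0.1
  · subst h
    rw [if_pos rfl]
    rw [Finset.sum_eq_single g0.2] <;> simp +contextual [Prod.ext_iff, eq_comm]
  · rw [if_neg h]
    refine Finset.sum_eq_zero fun j _ => ?_
    simp [Prod.ext_iff, h]

private lemma sum_ite_cell_col (g0 : R × C) (j : C) :
    ∑ i, (if (i, j) = g0 then (1 : ℝ) else 0) = if j = g0.2 then 1 else 0 := by
  by_cases h : j = g0.2
  · subst h
    rw [if_pos rfl]
    rw [Finset.sum_eq_single g0.1] <;> simp +contextual [Prod.ext_iff, eq_comm]
  · rw [if_neg h]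
    refine Finset.sum_eq_zero fun i _ => ?_
    simp [Prod.ext_iff, h]

/-- A direction-blind walk yields a "unit dipole" flow. -/
private lemma conn_circ {S : Set (R × C)} {v w : R ⊕ C}
    (h : Relation.ReflTransGen (Adj S) v w) :
    ∃ z : R × C → ℝ, (∀ g, z g ≠ 0 → g ∈ S) ∧
      (∀ i : R, ∑ j, z (i, j) =
        (if v = Sum.inl i then 1 else 0) - (if w = Sum.inl i then 1 else 0)) ∧
      (∀ j : C, ∑ i, z (i, j) =
        (if w = Sum.inr j then 1 else 0) - (if v = Sum.inr j then 1 else 0)) := by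
  induction h with
  | refl => exact ⟨fun _ => 0, fun g hg => absurd rfl hg, fun i => by simp, fun j => by simp⟩
  | tail hab hbc ih =>
    obtain ⟨z, hmem, hrowz, hcolz⟩ := ih
    obtain ⟨g0, hg0S, hor⟩ := hbc
    rcases hor with ⟨h1, h2⟩ | ⟨h1, h2⟩
    · -- step from row g0.1 to column g0.2 : add +1 on g0
      subst h1; subst h2
      refine ⟨fun g => z g + (if g = g0 then 1 else 0), ?_, ?_, ?_⟩
      · intro g hg
        by_cases h : g = g0
        · exact h ▸ hg0S
        · simp only [h, if_neg, if_false, add_zero] at hg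
          exact hmem g (by simpa [h] using hg)
      · intro i
        rw [Finset.sum_add_distrib, hrowz i, sum_ite_cell_row]
        by_cases hig : i = g0.1 <;> simp [hig, eq_comm] <;> ring
      · intro j
        rw [Finset.sum_add_distrib, hcolz j, sum_ite_cell_col]
        by_cases hjg : j = g0.2 <;> simp [hjg, eq_comm] <;> ring
    · -- step from column g0.2 to row g0.1 : add -1 on g0
      subst h1; subst h2
      refine ⟨fun g => z g - (if g = g0 then 1 else 0), ?_, ?_, ?_⟩
      · intro g hg
        by_cases h : g = g0
        · exact h ▸ hg0S
        · exact hmem g (by simpa [h] using hg)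
      · intro i
        rw [Finset.sum_sub_distrib, hrowz i, sum_ite_cell_row]
        by_cases hig : i = g0.1 <;> simp [hig, eq_comm] <;> ring
      · intro j
        rw [Finset.sum_sub_distrib, hcolz j, sum_ite_cell_col]
        by_cases hjg : j = g0.2 <;> simp [hjg, eq_comm] <;> ring

/-- A traversable walk yields a unit dipole flow whose sign pattern respects the
strict slack of the table on each cell. -/
private lemma mreach_circ {T : Table R C} {v w : R ⊕ C}
    (h : MReach T T.sup v w) :
    ∃ z : R × C → ℝ, (∀ g, z g ≠ 0 → g ∈ T.sup) ∧
      (∀ g, 0 < z g → T.val g < T.hi g) ∧ (∀ g, z g < 0 → T.lo g < T.val g) ∧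
      (∀ i : R, ∑ j, z (i, j) =
        (if v = Sum.inl i then 1 else 0) - (if w = Sum.inl i then 1 else 0)) ∧
      (∀ j : C, ∑ i, z (i, j) =
        (if w = Sum.inr j then 1 else 0) - (if v = Sum.inr j then 1 else 0)) := by
  induction h with
  | refl =>
    exact ⟨fun _ => 0, fun g hg => absurd rfl hg, fun g hg => absurd hg (by simp),
      fun g hg => absurd hg (by simp), fun i => by simp, fun j => by simp⟩
  | tail hab hbc ih =>
    obtain ⟨z, hmem, hup, hdn, hrowz, hcolz⟩ := ih
    obtain ⟨g0, hg0S, hor⟩ := hbc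
    rcases hor with ⟨hslack, h1, h2⟩ | ⟨hslack, h1, h2⟩
    · subst h1; subst h2
      refine ⟨fun g => z g + (if g = g0 then 1 else 0), ?_, ?_, ?_, ?_, ?_⟩
      · intro g hg
        by_cases h : g = g0
        · exact h ▸ hg0S
        · exact hmem g (by simpa [h] using hg)
      · intro g hg
        by_cases h : g = g0
        · exact h ▸ hslack
        · simp only [h, if_false, add_zero] at hg
          exact hup g hg
      · intro g hg
        by_cases h : g = g0
        · subst h
          simp at hg
          exact hdn g (by linarith)
        · simp only [h, if_false, add_zero] at hg
          exact hdn g hg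
      · intro i
        rw [Finset.sum_add_distrib, hrowz i, sum_ite_cell_row]
        by_cases hig : i = g0.1 <;> simp [hig, eq_comm] <;> ring
      · intro j
        rw [Finset.sum_add_distrib, hcolz j, sum_ite_cell_col]
        by_cases hjg : j = g0.2 <;> simp [hjg, eq_comm] <;> ring
    · subst h1; subst h2
      refine ⟨fun g => z g - (if g = g0 then 1 else 0), ?_, ?_, ?_, ?_, ?_⟩
      · intro g hg
        by_cases h : g = g0
        · exact h ▸ hg0S
        · exact hmem g (by simpa [h] using hg)
      · intro g hg
        by_cases h : g = g0
        · subst h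
          simp at hg
          exact hup g (by linarith)
        · simp only [h, if_false, sub_zero] at hg
          exact hup g hg
      · intro g hg
        by_cases h : g = g0
        · exact h ▸ hslack
        · simp only [h, if_false, sub_zero] at hg
          exact hdn g hg
      · intro i
        rw [Finset.sum_sub_distrib, hrowz i, sum_ite_cell_row]
        by_cases hig : i = g0.1 <;> simp [hig, eq_comm] <;> ring
      · intro j
        rw [Finset.sum_sub_distrib, hcolz j, sum_ite_cell_col]
        by_cases hjg : j = g0.2 <;> simp [hjg, eq_comm] <;> ring

end AuxStmt5b
section AuxStmt5c

open Classical
set_option linter.unusedSectionVars false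

variable [Fintype R] [Fintype C] [Nonempty R] [Nonempty C]

/-- Scaling a sign-compatible circulation yields a BFA strictly inside the
bounds on the support of the circulation. -/
private lemma exists_interior_bfa (T : Table R C) (z : R × C → ℝ)
    (hmem : ∀ g, z g ≠ 0 → g ∈ T.sup)
    (hup : ∀ g, 0 < z g → T.val g < T.hi g)
    (hdn : ∀ g, z g < 0 → T.lo g < T.val g)
    (hrow : ∀ i : R, ∑ j, z (i, j) = 0) (hcol : ∀ j : C, ∑ i, z (i, j) = 0) :
    ∃ x, BFA T x ∧ ∀ g, z g ≠ 0 → T.lo g < x g ∧ x g < T.hi g := by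
  have hne : (Finset.univ : Finset (R × C)).Nonempty := Finset.univ_nonempty
  set s : R × C → ℝ := fun g =>
    if 0 < z g then (T.hi g - T.val g) / z g
    else if z g < 0 then (T.val g - T.lo g) / (- z g) else 1 with hs
  have hspos : ∀ g, 0 < s g := by
    intro g
    rcases lt_trichotomy (z g) 0 with h | h | h
    · simp only [hs, if_neg (by linarith : ¬ 0 < z g), if_pos h]
      exact div_pos (by linarith [hdn g h]) (by linarith)
    · simp [hs, h]
    · simp only [hs, if_pos h]
      exact div_pos (by linarith [hup g h]) h
  set t : ℝ := (Finset.univ.inf' hne s) / 2 with ht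
  have hinfpos : 0 < Finset.univ.inf' hne s :=
    (Finset.lt_inf'_iff hne).mpr fun g _ => hspos g
  have htpos : 0 < t := by positivity
  have hts : ∀ g, t < s g := by
    intro g
    calc t < Finset.univ.inf' hne s := by linarith
    _ ≤ s g := Finset.inf'_le _ (Finset.mem_univ g)
  have hkey : ∀ g, z g ≠ 0 → T.lo g < T.val g + t * z g ∧ T.val g + t * z g < T.hi g := by
    intro g hg
    rcases hg.lt_or_gt with h | h
    · constructor
      · have := hts g
        rw [hs] at this
        simp only [if_neg (by linarith : ¬ 0 < z g), if_pos h] at this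
        have := (lt_div_iff₀ (by linarith : (0:ℝ) < - z g)).mp this
        linarith
      · nlinarith [T.le_hi g]
    · constructor
      · nlinarith [T.lo_le g]
      · have := hts g
        rw [hs] at this
        simp only [if_pos h] at this
        have := (lt_div_iff₀ h).mp this
        linarith
  refine ⟨fun g => T.val g + t * z g, ⟨?_, ?_, ?_, ?_⟩, fun g hg => hkey g hg⟩
  · intro g hg
    have : z g = 0 := by
      by_contra h
      exact hg (hmem g h)
    simp [this]
  · intro g hg
    by_cases h : z g = 0
    · simp [h, T.lo_le g, T.le_hi g]
    · exact ⟨le_of_lt (hkey g h).1, le_of_lt (hkey g h).2⟩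
  · intro i
    rw [Finset.sum_add_distrib, ← Finset.mul_sum, hrow i, mul_zero, add_zero]
  · intro j
    rw [Finset.sum_add_distrib, ← Finset.mul_sum, hcol j, mul_zero, add_zero]

/-- Any suppressed cell with mutually reachable endpoints admits a BFA strictly
inside the bounds at that cell. -/
private lemma exists_bfa_interior_at (T : Table R C) {f : R × C} (hf : f ∈ T.sup)
    (hmut : MutReach T T.sup (Sum.inl f.1) (Sum.inr f.2)) :
    ∃ x, BFA T x ∧ T.lo f < x f ∧ x f < T.hi f := by
  by_cases hvlo : T.lo f < T.val f
  · by_cases hvhi : T.val f < T.hi f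
    · exact ⟨T.val, bfa_val T, hvlo, hvhi⟩
    · -- T.val f = T.hi f ; use the walk from the row to the column and push down
      obtain ⟨zp, hmem, hup, hdn, hrowz, hcolz⟩ := mreach_circ hmut.1
      set z : R × C → ℝ := fun g => zp g - (if g = f then 1 else 0) with hz
      have hzpf : zp f ≤ 0 := le_of_not_gt fun h => hvhi (hup f h)
      have hzf : z f ≤ -1 := by simp [hz]; linarith
      have hzmem : ∀ g, z g ≠ 0 → g ∈ T.sup := by
        intro g hg
        by_cases h : g = f
        · exact h ▸ hf
        · exact hmem g (by simpa [hz, h] using hg)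
      have hzup : ∀ g, 0 < z g → T.val g < T.hi g := by
        intro g hg
        by_cases h : g = f
        · subst h; simp [hz] at hg; exact hup g (by linarith)
        · simp only [hz, h, if_false, sub_zero] at hg; exact hup g hg
      have hzdn : ∀ g, z g < 0 → T.lo g < T.val g := by
        intro g hg
        by_cases h : g = f
        · exact h ▸ hvlo
        · simp only [hz, h, if_false, sub_zero] at hg; exact hdn g hg
      have hzrow : ∀ i : R, ∑ j, z (i, j) = 0 := by
        intro i
        simp only [hz]
        rw [Finset.sum_sub_distrib, hrowz i, sum_ite_cell_row]
        by_cases h : i = f.1 <;> simp [h, eq_comm] <;> ring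
      have hzcol : ∀ j : C, ∑ i, z (i, j) = 0 := by
        intro j
        simp only [hz]
        rw [Finset.sum_sub_distrib, hcolz j, sum_ite_cell_col]
        by_cases h : j = f.2 <;> simp [h, eq_comm] <;> ring
      obtain ⟨x, hx, hint⟩ := exists_interior_bfa T z hzmem hzup hzdn hzrow hzcol
      exact ⟨x, hx, hint f (by linarith)⟩
  · -- T.val f = T.lo f ; use the walk from the column to the row and push up
    have hvlo' : T.val f = T.lo f := le_antisymm (le_of_not_gt hvlo) (T.lo_le f)
    have hvhi : T.val f < T.hi f := hvlo' ▸ T.lo_lt_hi f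
    obtain ⟨zp, hmem, hup, hdn, hrowz, hcolz⟩ := mreach_circ hmut.2
    set z : R × C → ℝ := fun g => zp g + (if g = f then 1 else 0) with hz
    have hzpf : 0 ≤ zp f := le_of_not_gt fun h => by
      have := hdn f h; rw [hvlo'] at this; exact lt_irrefl _ this
    have hzf : 1 ≤ z f := by simp [hz]; linarith
    have hzmem : ∀ g, z g ≠ 0 → g ∈ T.sup := by
      intro g hg
      by_cases h : g = f
      · exact h ▸ hf
      · exact hmem g (by simpa [hz, h] using hg)
    have hzup : ∀ g, 0 < z g → T.val g < T.hi g := by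
      intro g hg
      by_cases h : g = f
      · exact h ▸ hvhi
      · simp only [hz, h, if_false, add_zero] at hg; exact hup g hg
    have hzdn : ∀ g, z g < 0 → T.lo g < T.val g := by
      intro g hg
      by_cases h : g = f
      · subst h; simp [hz] at hg; exact hdn g (by linarith)
      · simp only [hz, h, if_false, add_zero] at hg; exact hdn g hg
    have hzrow : ∀ i : R, ∑ j, z (i, j) = 0 := by
      intro i
      simp only [hz]
      rw [Finset.sum_add_distrib, hrowz i, sum_ite_cell_row]
      by_cases h : i = f.1 <;> simp [h, eq_comm] <;> ring
    have hzcol : ∀ j : C, ∑ i, z (i, j) = 0 := by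
      intro j
      simp only [hz]
      rw [Finset.sum_add_distrib, hcolz j, sum_ite_cell_col]
      by_cases h : j = f.2 <;> simp [h, eq_comm] <;> ring
    obtain ⟨x, hx, hint⟩ := exists_interior_bfa T z hzmem hzup hzdn hzrow hzcol
    exact ⟨x, hx, hint f (by linarith)⟩

end AuxStmt5c
section AuxStmt5d

open Classical
set_option linter.unusedSectionVars false

variable [Fintype R] [Fintype C] [Nonempty R] [Nonempty C]

/-- A single BFA strictly inside the bounds at every "movable" suppressed cell. -/
private lemma exists_uniform_interior_bfa (T : Table R C) :
    ∃ x, BFA T x ∧ ∀ f ∈ T.sup, MutReach T T.sup (Sum.inl f.1) (Sum.inr f.2) →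
      T.lo f < x f ∧ x f < T.hi f := by
  classical
  set M : Finset (R × C) := Finset.univ.filter
    (fun f => f ∈ T.sup ∧ MutReach T T.sup (Sum.inl f.1) (Sum.inr f.2)) with hM
  have hchoice : ∀ f ∈ M, ∃ x, BFA T x ∧ T.lo f < x f ∧ x f < T.hi f := by
    intro f hf
    rw [hM, Finset.mem_filter] at hf
    exact exists_bfa_interior_at T hf.2.1 hf.2.2
  choose! xc hxc using hchoice
  set n : ℕ := M.card with hn
  have hden : (0:ℝ) < n + 1 := by positivity
  refine ⟨fun g => (T.val g + ∑ f ∈ M, xc f g) / (n + 1), ⟨?_, ?_, ?_, ?_⟩, ?_⟩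
  · intro g hg
    have : ∀ f ∈ M, xc f g = T.val g := fun f hf => (hxc f hf).1.1 g hg
    beta_reduce
    rw [Finset.sum_congr rfl this, Finset.sum_const, nsmul_eq_mul]
    field_simp
    ring
  · intro g hg
    beta_reduce
    constructor
    · rw [le_div_iff₀ hden]
      have h1 : ∀ f ∈ M, T.lo g ≤ xc f g := fun f hf => ((hxc f hf).1.2.1 g hg).1
      have h2 : (n:ℝ) * T.lo g ≤ ∑ f ∈ M, xc f g := by
        calc (n:ℝ) * T.lo g = ∑ _f ∈ M, T.lo g := by
              rw [Finset.sum_const, nsmul_eq_mul]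
          _ ≤ ∑ f ∈ M, xc f g := Finset.sum_le_sum h1
      linarith [T.lo_le g]
    · rw [div_le_iff₀ hden]
      have h1 : ∀ f ∈ M, xc f g ≤ T.hi g := fun f hf => ((hxc f hf).1.2.1 g hg).2
      have h2 : ∑ f ∈ M, xc f g ≤ (n:ℝ) * T.hi g := by
        calc ∑ f ∈ M, xc f g ≤ ∑ _f ∈ M, T.hi g := Finset.sum_le_sum h1
          _ = (n:ℝ) * T.hi g := by rw [Finset.sum_const, nsmul_eq_mul]
      linarith [T.le_hi g]
  · intro i
    beta_reduce
    rw [← Finset.sum_div]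
    rw [Finset.sum_add_distrib, Finset.sum_comm]
    have : ∀ f ∈ M, ∑ j, xc f (i, j) = ∑ j, T.val (i, j) := fun f hf =>
      (hxc f hf).1.2.2.1 i
    rw [Finset.sum_congr rfl this, Finset.sum_const, nsmul_eq_mul]
    field_simp
    ring
  · intro j
    beta_reduce
    rw [← Finset.sum_div]
    rw [Finset.sum_add_distrib, Finset.sum_comm]
    have : ∀ f ∈ M, ∑ i, xc f (i, j) = ∑ i, T.val (i, j) := fun f hf =>
      (hxc f hf).1.2.2.2 j
    rw [Finset.sum_congr rfl this, Finset.sum_const, nsmul_eq_mul]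
    field_simp
    ring
  · intro f hfs hfm
    have hfM : f ∈ M := by rw [hM, Finset.mem_filter]; exact ⟨Finset.mem_univ f, hfs, hfm⟩
    beta_reduce
    constructor
    · rw [lt_div_iff₀ hden]
      have h1 : ∀ g ∈ M, T.lo f ≤ xc g f := fun g hg => ((hxc g hg).1.2.1 f hfs).1
      have h2 : ∑ _g ∈ M, T.lo f < ∑ g ∈ M, xc g f :=
        Finset.sum_lt_sum h1 ⟨f, hfM, (hxc f hfM).2.1⟩
      rw [Finset.sum_const, nsmul_eq_mul] at h2
      linarith [T.lo_le f]
    · rw [div_lt_iff₀ hden]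
      have h1 : ∀ g ∈ M, xc g f ≤ T.hi f := fun g hg => ((hxc g hg).1.2.1 f hfs).2
      have h2 : ∑ g ∈ M, xc g f < ∑ _g ∈ M, T.hi f :=
        Finset.sum_lt_sum h1 ⟨f, hfM, (hxc f hfM).2.2⟩
      rw [Finset.sum_const, nsmul_eq_mul] at h2
      linarith [T.le_hi f]

/-- Under conditions (1) and (2), every cell of `Q` supports a circulation that
is `1` there, vanishes on the rest of `Q`, and is supported on movable cells. -/
private lemma exists_unit_circ (T : Table R C) (Q : Set (R × C)) (hQ : Q ⊆ T.sup)
    (h1 : ∀ e ∈ Q, MutReach T T.sup (Sum.inl e.1) (Sum.inr e.2))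
    (h2 : ∀ D : Set (R ⊕ C), IsSCC T T.sup D → ConnectedOn (EdgesIn T.sup D \ Q) D)
    {e : R × C} (he : e ∈ Q) :
    ∃ z : R × C → ℝ, z e = 1 ∧ (∀ g ∈ Q, g ≠ e → z g = 0) ∧
      (∀ g, z g ≠ 0 → g ∈ T.sup ∧ MutReach T T.sup (Sum.inl g.1) (Sum.inr g.2)) ∧
      (∀ i : R, ∑ j, z (i, j) = 0) ∧ (∀ j : C, ∑ i, z (i, j) = 0) := by
  set D : Set (R ⊕ C) := {w | MutReach T T.sup (Sum.inl e.1) w} with hD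
  have hDscc : IsSCC T T.sup D := ⟨Sum.inl e.1, rfl⟩
  have hmem1 : Sum.inl e.1 ∈ D := mutReach_refl T T.sup _
  have hmem2 : Sum.inr e.2 ∈ D := h1 e he
  set S0 : Set (R × C) := EdgesIn T.sup D \ Q with hS0
  have hconn : Relation.ReflTransGen (Adj S0) (Sum.inr e.2) (Sum.inl e.1) :=
    h2 D hDscc _ hmem2 _ hmem1
  obtain ⟨zp, hmem, hrowz, hcolz⟩ := conn_circ hconn
  have hzpQ : ∀ g ∈ Q, zp g = 0 := by
    intro g hg
    by_contra h
    exact (hmem g h).2 hg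
  refine ⟨fun g => zp g + (if g = e then 1 else 0), ?_, ?_, ?_, ?_, ?_⟩
  · beta_reduce
    rw [if_pos rfl, hzpQ e he, zero_add]
  · intro g hg hne
    beta_reduce
    rw [if_neg hne, hzpQ g hg, add_zero]
  · intro g hg
    by_cases h : g = e
    · subst h; exact ⟨hQ he, h1 g he⟩
    · simp only [if_neg h, add_zero] at hg
      have hg' := hmem g hg
      rw [hS0, Set.mem_diff] at hg'
      obtain ⟨⟨hgsup, hgl, hgr⟩, -⟩ := hg'
      exact ⟨hgsup, mutReach_trans (mutReach_symm hgl) hgr⟩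
  · intro i
    beta_reduce
    rw [Finset.sum_add_distrib, hrowz i, sum_ite_cell_row]
    by_cases h : i = e.1 <;> simp [h, eq_comm] <;> ring
  · intro j
    beta_reduce
    rw [Finset.sum_add_distrib, hcolz j, sum_ite_cell_col]
    by_cases h : j = e.2 <;> simp [h, eq_comm] <;> ring

end AuxStmt5d
section AuxStmt5e

open Classical
set_option linter.unusedSectionVars false

variable [Fintype R] [Fintype C] [Nonempty R] [Nonempty C]

/-- Under conditions (1) and (2) there is a BFA `xb` and a radius `ε` such that any
prescription of the `Q`-coordinates within `ε` of `xb` extends to a BFA. -/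
private lemma exists_bfa_ball (T : Table R C) (Q : Set (R × C)) (hQ : Q ⊆ T.sup)
    (h1 : ∀ e ∈ Q, MutReach T T.sup (Sum.inl e.1) (Sum.inr e.2))
    (h2 : ∀ D : Set (R ⊕ C), IsSCC T T.sup D → ConnectedOn (EdgesIn T.sup D \ Q) D) :
    ∃ (xb : R × C → ℝ) (ε : ℝ), 0 < ε ∧ BFA T xb ∧
      ∀ u : R × C → ℝ, (∀ g, |u g - xb g| < ε) →
        ∃ x, BFA T x ∧ ∀ e ∈ Q, x e = u e := by
  classical
  obtain ⟨xb, hxb, hint⟩ := exists_uniform_interior_bfa T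
  have hch : ∀ e ∈ Q, ∃ z : R × C → ℝ, z e = 1 ∧ (∀ g ∈ Q, g ≠ e → z g = 0) ∧
      (∀ g, z g ≠ 0 → g ∈ T.sup ∧ MutReach T T.sup (Sum.inl g.1) (Sum.inr g.2)) ∧
      (∀ i : R, ∑ j, z (i, j) = 0) ∧ (∀ j : C, ∑ i, z (i, j) = 0) :=
    fun e he => exists_unit_circ T Q hQ h1 h2 he
  choose! zc hz1 hz2 hz3 hz4 hz5 using hch
  set Qf : Finset (R × C) := Finset.univ.filter (· ∈ Q) with hQf
  have hQfQ : ∀ e, e ∈ Qf ↔ e ∈ Q := by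
    intro e; rw [hQf, Finset.mem_filter]; simp
  set Mv : Set (R × C) :=
    {g | g ∈ T.sup ∧ MutReach T T.sup (Sum.inl g.1) (Sum.inr g.2)} with hMv
  set den : R × C → ℝ := fun g => 1 + ∑ e ∈ Qf, |zc e g| with hden
  have hdenpos : ∀ g, 0 < den g := by
    intro g
    have : 0 ≤ ∑ e ∈ Qf, |zc e g| := Finset.sum_nonneg fun e _ => abs_nonneg _
    simp only [hden]; linarith
  set slack : R × C → ℝ := fun g => min (xb g - T.lo g) (T.hi g - xb g) with hslack
  have hslackpos : ∀ g ∈ Mv, 0 < slack g := by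
    intro g hg
    obtain ⟨hgs, hgm⟩ := hg
    obtain ⟨hl, hr⟩ := hint g hgs hgm
    simp only [hslack, lt_min_iff]
    constructor <;> linarith
  set εf : R × C → ℝ := fun g => if g ∈ Mv then slack g / den g else 1 with hεf
  have hεfpos : ∀ g, 0 < εf g := by
    intro g
    by_cases h : g ∈ Mv
    · simp only [hεf, if_pos h]
      exact div_pos (hslackpos g h) (hdenpos g)
    · simp [hεf, h]
  have hne : (Finset.univ : Finset (R × C)).Nonempty := Finset.univ_nonempty
  set ε : ℝ := Finset.univ.inf' hne εf with hε
  have hεpos : 0 < ε := (Finset.lt_inf'_iff hne).mpr fun g _ => hεfpos g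
  have hεle : ∀ g, ε ≤ εf g := fun g => Finset.inf'_le _ (Finset.mem_univ g)
  refine ⟨xb, ε, hεpos, hxb, ?_⟩
  intro u hu
  set x : R × C → ℝ := fun g => xb g + ∑ e ∈ Qf, (u e - xb e) * zc e g with hx
  obtain ⟨hxboff, hxbbd, hxbrow, hxbcol⟩ := hxb
  -- support of the correction lies in the movable cells
  have hsupp : ∀ g, g ∉ Mv → ∀ e ∈ Qf, zc e g = 0 := by
    intro g hg e heQ
    by_contra h
    exact hg (hz3 e ((hQfQ e).mp heQ) g h)
  have hxmv : ∀ g, g ∈ Mv → |x g - xb g| < slack g := by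
    intro g hg
    have hb : |x g - xb g| ≤ ∑ e ∈ Qf, |u e - xb e| * |zc e g| := by
      simp only [hx, add_sub_cancel_left]
      calc |∑ e ∈ Qf, (u e - xb e) * zc e g| ≤ ∑ e ∈ Qf, |(u e - xb e) * zc e g| :=
            Finset.abs_sum_le_sum_abs _ _
        _ = ∑ e ∈ Qf, |u e - xb e| * |zc e g| := by
            refine Finset.sum_congr rfl fun e _ => abs_mul _ _
    have hb2 : ∑ e ∈ Qf, |u e - xb e| * |zc e g| ≤ ε * ∑ e ∈ Qf, |zc e g| := by
      rw [Finset.mul_sum]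
      refine Finset.sum_le_sum fun e _ => ?_
      exact mul_le_mul_of_nonneg_right (le_of_lt (hu e)) (abs_nonneg _)
    have hb3 : ε * ∑ e ∈ Qf, |zc e g| < ε * den g := by
      have : (∑ e ∈ Qf, |zc e g|) < den g := by simp only [hden]; linarith
      exact mul_lt_mul_of_pos_left this hεpos
    have hb4 : ε * den g ≤ εf g * den g :=
      mul_le_mul_of_nonneg_right (hεle g) (le_of_lt (hdenpos g))
    have hb5 : εf g * den g = slack g := by
      rw [hεf]
      simp only [if_pos hg]
      field_simp
      exact mul_div_cancel_right₀ _ (hdenpos g).ne'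
    linarith
  refine ⟨x, ⟨?_, ?_, ?_, ?_⟩, ?_⟩
  · intro g hg
    have hgmv : g ∉ Mv := fun h => hg h.1
    have : ∀ e ∈ Qf, (u e - xb e) * zc e g = 0 := fun e he => by
      rw [hsupp g hgmv e he, mul_zero]
    simp only [hx]
    rw [Finset.sum_congr rfl this, Finset.sum_const, smul_zero, add_zero]
    exact hxboff g hg
  · intro g hg
    by_cases hgmv : g ∈ Mv
    · have habs := hxmv g hgmv
      have h1' := abs_lt.mp habs
      have hsl : slack g ≤ xb g - T.lo g := min_le_left _ _
      have hsr : slack g ≤ T.hi g - xb g := min_le_right _ _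
      constructor <;> linarith
    · have : ∀ e ∈ Qf, (u e - xb e) * zc e g = 0 := fun e he => by
        rw [hsupp g hgmv e he, mul_zero]
      simp only [hx]
      rw [Finset.sum_congr rfl this, Finset.sum_const, smul_zero, add_zero]
      exact hxbbd g hg
  · intro i
    simp only [hx]
    rw [Finset.sum_add_distrib, hxbrow i, Finset.sum_comm]
    have : ∀ e ∈ Qf, ∑ j, (u e - xb e) * zc e (i, j) = 0 := by
      intro e he
      rw [← Finset.mul_sum, hz4 e ((hQfQ e).mp he) i, mul_zero]
    rw [Finset.sum_congr rfl this, Finset.sum_const, smul_zero, add_zero]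
  · intro j
    simp only [hx]
    rw [Finset.sum_add_distrib, hxbcol j, Finset.sum_comm]
    have : ∀ e ∈ Qf, ∑ i, (u e - xb e) * zc e (i, j) = 0 := by
      intro e he
      rw [← Finset.mul_sum, hz5 e ((hQfQ e).mp he) j, mul_zero]
    rw [Finset.sum_congr rfl this, Finset.sum_const, smul_zero, add_zero]
  · intro e he
    have heQf : e ∈ Qf := (hQfQ e).mpr he
    simp only [hx]
    rw [Finset.sum_eq_single_of_mem e heQf]
    · rw [hz1 e he, mul_one]; ring
    · intro f hf hfe
      rw [hz2 f ((hQfQ f).mp hf) e he (Ne.symm hfe), mul_zero]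

private lemma sum_single_coeff (e : R × C) (x : R × C → ℝ) :
    ∑ g, (if g = e then (1:ℝ) else 0) * x g = x e := by
  rw [Finset.sum_eq_single_of_mem e (Finset.mem_univ e)]
  · rw [if_pos rfl, one_mul]
  · intro f _ hfe
    rw [if_neg hfe, zero_mul]

private lemma entire_linear (c : R × C → ℝ) :
    Entire (fun x : R × C → ℝ => ∑ g, c g * x g) := by
  have h : (fun x : R × C → ℝ => ∑ g, c g * x g) =
      ⇑(∑ g : R × C, c g • (ContinuousLinearMap.proj g :
        ((R × C) → ℝ) →L[ℝ] ℝ)) := by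
    funext x
    rw [ContinuousLinearMap.sum_apply]
    refine Finset.sum_congr rfl fun g _ => ?_
    rw [ContinuousLinearMap.smul_apply, ContinuousLinearMap.proj_apply, smul_eq_mul]
  rw [h]
  exact ⟨_, 0, ContinuousLinearMap.hasFPowerSeriesOnBall _ 0⟩

private lemma dependsOnlyOn_linear (c : R × C → ℝ) (S : Set (R × C))
    (h : ∀ g, c g ≠ 0 → g ∈ S) :
    DependsOnlyOn (fun x : R × C → ℝ => ∑ g, c g * x g) S := by
  intro x y hxy
  refine Finset.sum_congr rfl fun g _ => ?_
  by_cases hc : c g = 0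
  · rw [hc, zero_mul, zero_mul]
  · rw [hxy g (h g hc)]

private lemma isEA_linear (c : R × C → ℝ) :
    IsEA (fun x : R × C → ℝ => ∑ g, c g * x g) {g | c g ≠ 0} := by
  constructor
  · exact dependsOnlyOn_linear c _ fun g hg => hg
  · intro S' hS' g0 hg0
    by_contra hnot
    have hagree : ∀ e ∈ S', (fun _ : R × C => (0:ℝ)) e =
        (fun g => if g = g0 then (1:ℝ) else 0) e := by
      intro e he
      have : e ≠ g0 := fun h => hnot (h ▸ he)
      simp [this]
    have h0 := hS' _ _ hagree
    simp only [mul_zero, Finset.sum_const_zero] at h0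
    rw [show (∑ g : R × C, c g * (if g = g0 then (1:ℝ) else 0)) = c g0 by
      rw [Finset.sum_eq_single_of_mem g0 (Finset.mem_univ g0)]
      · rw [if_pos rfl, mul_one]
      · intro f _ hf; rw [if_neg hf, mul_zero]] at h0
    exact hg0 h0.symm

end AuxStmt5e
/-- `Q` is totally protected iff (1) every edge of `Q` has mutually reachable
endpoints in the suppressed graph, and (2) every strongly connected component
remains connected (direction-blind) after removing the edges of `Q`. -/
theorem stmt5 [Fintype R] [Fintype C] [Nonempty R] [Nonempty C]
    (T : Table R C) (Q : Set (R × C)) (hQ : Q ⊆ T.sup) :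
    TotallyProtected T Q ↔
      ((∀ e ∈ Q, MutReach T T.sup (Sum.inl e.1) (Sum.inr e.2)) ∧
       (∀ D : Set (R ⊕ C), IsSCC T T.sup D →
          ConnectedOn (EdgesIn T.sup D \ Q) D)) := by
  classical
  constructor
  · intro hTP
    constructor
    · -- condition (1)
      intro e he
      by_contra hmr
      apply hTP
      set c1 : R × C → ℝ := fun g => if g = e then (1:ℝ) else 0 with hc1
      refine ⟨fun x => ∑ g, c1 g * x g, {g | c1 g ≠ 0}, entire_linear c1, ?_, ?_,
        isEA_linear c1, ?_, ?_⟩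
      · refine dependsOnlyOn_linear c1 T.sup fun g hg => ?_
        have : g = e := by
          by_contra h
          exact hg (by simp [hc1, h])
        exact this ▸ hQ he
      · intro x y hx hy
        beta_reduce
        simp only [hc1]
        rw [sum_single_coeff, sum_single_coeff, fixed_cell hx hmr, fixed_cell hy hmr]
      · intro g hg
        have : g = e := by
          by_contra h
          exact hg (by simp [hc1, h])
        exact this ▸ he
      · exact ⟨e, by simp [hc1]⟩
    · -- condition (2)
      intro D hD vA hvA vB hvB
      by_contra hconn
      obtain ⟨v0, hDeq⟩ := hD
      apply hTP
      set S0 : Set (R × C) := EdgesIn T.sup D \ Q with hS0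
      set A : Set (R ⊕ C) := {w | w ∈ D ∧ Relation.ReflTransGen (Adj S0) vA w} with hA
      have hvAA : vA ∈ A := ⟨hvA, Relation.ReflTransGen.refl⟩
      have hvBA : vB ∉ A := fun h => hconn h.2
      -- membership in D through mutual reachability
      have hDmem : ∀ w, w ∈ D ↔ MutReach T T.sup v0 w := by
        intro w; rw [hDeq]; rfl
      set K : Set (R × C) := {g | g ∈ T.sup ∧ Sum.inl g.1 ∈ A ∧
        Sum.inr g.2 ∈ D ∧ Sum.inr g.2 ∉ A} with hK
      set K' : Set (R × C) := {g | g ∈ T.sup ∧ Sum.inr g.2 ∈ A ∧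
        Sum.inl g.1 ∈ D ∧ Sum.inl g.1 ∉ A} with hK'
      set c2 : R × C → ℝ := fun g => if g ∈ K then (1:ℝ) else if g ∈ K' then -1 else 0
        with hc2
      have hKQ : ∀ g, c2 g ≠ 0 → g ∈ Q := by
        intro g hg
        by_contra hgQ
        have hcases : g ∈ K ∨ g ∈ K' := by
          by_contra h
          push_neg at h
          exact hg (by simp [hc2, h.1, h.2])
        rcases hcases with hk | hk
        · obtain ⟨hgs, hgl, hgr, hgrA⟩ := hk
          have hgS0 : g ∈ S0 := ⟨⟨hgs, hgl.1, hgr⟩, hgQ⟩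
          exact hgrA ⟨hgr, hgl.2.tail ⟨g, hgS0, Or.inl ⟨rfl, rfl⟩⟩⟩
        · obtain ⟨hgs, hgr, hgl, hglA⟩ := hk
          have hgS0 : g ∈ S0 := ⟨⟨hgs, hgl, hgr.1⟩, hgQ⟩
          exact hglA ⟨hgl, hgr.2.tail ⟨g, hgS0, Or.inr ⟨rfl, rfl⟩⟩⟩
      refine ⟨fun x => ∑ g, c2 g * x g, {g | c2 g ≠ 0}, entire_linear c2, ?_, ?_,
        isEA_linear c2, ?_, ?_⟩
      · exact dependsOnlyOn_linear c2 T.sup fun g hg => hQ (hKQ g hg)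
      · -- invariance via the cut identity
        intro x y hx hy
        have hrow : ∀ i : R, ∑ j, (x (i, j) - y (i, j)) = 0 := by
          intro i
          rw [Finset.sum_sub_distrib, hx.2.2.1 i, hy.2.2.1 i, sub_self]
        have hcol : ∀ j : C, ∑ i, (x (i, j) - y (i, j)) = 0 := by
          intro j
          rw [Finset.sum_sub_distrib, hx.2.2.2 j, hy.2.2.2 j, sub_self]
        have hzprop : ∀ g : R × C, x g - y g ≠ 0 →
            g ∈ T.sup ∧ MutReach T T.sup (Sum.inl g.1) (Sum.inr g.2) := by
          intro g hg
          have hgs : g ∈ T.sup := by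
            by_contra h
            exact hg (by rw [hx.1 g h, hy.1 g h, sub_self])
          refine ⟨hgs, ?_⟩
          by_contra h
          exact hg (by rw [fixed_cell hx h, fixed_cell hy h, sub_self])
        have hpt : ∀ g : R × C, c2 g * (x g - y g) =
            (if Sum.inl g.1 ∈ A then x g - y g else 0) -
            (if Sum.inr g.2 ∈ A then x g - y g else 0) := by
          intro g
          by_cases hz0 : x g - y g = 0
          · rw [hz0]; simp
          · obtain ⟨hgs, hmut⟩ := hzprop g hz0
            by_cases hl : Sum.inl g.1 ∈ A <;> by_cases hr : Sum.inr g.2 ∈ A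
            · have hgK : g ∉ K := fun h => h.2.2.2 hr
              have hgK' : g ∉ K' := fun h => h.2.2.2 hl
              simp [hc2, hgK, hgK', hl, hr]
            · have hgD : Sum.inr g.2 ∈ D := by
                rw [hDmem]
                exact mutReach_trans ((hDmem _).mp hl.1) hmut
              have hgK : g ∈ K := ⟨hgs, hl, hgD, hr⟩
              simp [hc2, hgK, hl, hr]
            · have hgD : Sum.inl g.1 ∈ D := by
                rw [hDmem]
                exact mutReach_trans ((hDmem _).mp hr.1) (mutReach_symm hmut)
              have hgK : g ∉ K := fun h => hl h.2.1
              have hgK' : g ∈ K' := ⟨hgs, hr, hgD, hl⟩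
              simp [hc2, hgK, hgK', hl, hr]
            · have hgK : g ∉ K := fun h => hl h.2.1
              have hgK' : g ∉ K' := fun h => hr h.2.1
              simp [hc2, hgK, hgK', hl, hr]
        have hcut := cut_identity (fun g => x g - y g) hrow hcol A
        have hsum : ∑ g : R × C, c2 g * (x g - y g) = 0 := by
          rw [Finset.sum_congr rfl fun g _ => hpt g]
          convert hcut
        have hsplit : ∑ g : R × C, c2 g * (x g - y g) =
            ∑ g : R × C, c2 g * x g - ∑ g : R × C, c2 g * y g := by
          rw [← Finset.sum_sub_distrib]
          exact Finset.sum_congr rfl fun g _ => by ring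
        rw [hsplit] at hsum
        beta_reduce
        linarith
      · intro g hg
        exact hKQ g hg
      · -- nonemptiness : a traversable path from vA to vB must exit A
        have hreach : MReach T T.sup vA vB := by
          have h1 : MutReach T T.sup v0 vA := (hDmem vA).mp hvA
          have h2 : MutReach T T.sup v0 vB := (hDmem vB).mp hvB
          exact h1.2.trans h2.1
        have hexit : ∀ a, MReach T T.sup a vB → a ∈ A → ∃ g, c2 g ≠ 0 := by
          intro a ha
          induction ha using Relation.ReflTransGen.head_induction_on with
          | refl => exact fun h => absurd h hvBA
          | @head a' c' h' hrest ih =>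
            intro haA
            by_cases hc : c' ∈ A
            · exact ih hc
            · have hc'D : c' ∈ D := by
                rw [hDmem]
                constructor
                · exact (((hDmem a').mp haA.1).1.tail h')
                · exact hrest.trans ((hDmem vB).mp hvB).2
              obtain ⟨g, hgs, hor⟩ := h'
              rcases hor with ⟨-, h1', h2'⟩ | ⟨-, h1', h2'⟩
              · have hgK : g ∈ K := ⟨hgs, h1' ▸ haA, h2' ▸ hc'D, h2' ▸ hc⟩
                exact ⟨g, by simp [hc2, hgK]⟩
              · have hgK : g ∉ K := fun h => (h2' ▸ hc : Sum.inl g.1 ∉ A) h.2.1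
                have hgK' : g ∈ K' := ⟨hgs, h1' ▸ haA, h2' ▸ hc'D, h2' ▸ hc⟩
                exact ⟨g, by simp [hc2, hgK, hgK']⟩
        obtain ⟨g, hg⟩ := hexit vA hreach hvAA
        exact ⟨g, hg⟩
  · rintro ⟨h1, h2⟩ ⟨F, S, hent, hdep, hinv, hEA, hSQ, hSne⟩
    obtain ⟨p, ctr, hF⟩ := hent
    obtain ⟨hEA1, hEA2⟩ := hEA
    obtain ⟨xb, ε, hε, hxb, hball⟩ := exists_bfa_ball T Q hQ h1 h2
    have hconst : ∀ u : R × C → ℝ, dist u xb < ε → F u = F xb := by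
      intro u hu
      have hu' : ∀ g, |u g - xb g| < ε := by
        intro g
        have := (dist_pi_lt_iff hε).mp hu g
        rwa [Real.dist_eq] at this
      obtain ⟨x, hx, hxe⟩ := hball u hu'
      have h1' : F u = F x := hEA1 u x fun e heS => (hxe e (hSQ heS)).symm
      rw [h1', hinv x xb hx hxb]
    have hFanal : AnalyticOnNhd ℝ F Set.univ := fun y _ =>
      hF.analyticAt_of_mem (by simp only [EMetric.mem_ball]; exact edist_lt_top y ctr)
    have heqOn : Set.EqOn F (fun _ => F xb) Set.univ := by
      refine hFanal.eqOn_of_preconnected_of_eventuallyEq (g := fun _ => F xb)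
        analyticOnNhd_const
        (convex_univ : Convex ℝ (Set.univ : Set ((R × C) → ℝ))).isPreconnected
        (Set.mem_univ xb) ?_
      filter_upwards [Metric.ball_mem_nhds xb hε] with u hu
      exact hconst u (by rwa [Metric.mem_ball] at hu)
    have hdep0 : DependsOnlyOn F ∅ := by
      intro x y _
      rw [heqOn (Set.mem_univ x), heqOn (Set.mem_univ y)]
    obtain ⟨e, he⟩ := hSne
    exact hEA2 ∅ hdep0 he
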